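/- Let K be a closed cell complex and x, y ∈ K. Then x ⊊ y if and only if the dual set of y is strictly contained in the dual set of x; consequently the duality map x ↦ x̄ is a bijection from K onto its image {x̄ | x ∈ K}. -/

import Mathlib

open scoped Classical

universe u v

/-- Underlying data of a combinatorial cell complex: a finite collection of
finite subsets of a vertex type `V` (the cells) together with a rank function. -/
structure Precc (V : Type u) where
  cells : Finset (Finset V)
  rk : Finset V → ℕ

namespace Precc

variable {V : Type u} [DecidableEq V] [Fintype V]

/-- The axioms of a combinatorial cell complex (cc): cells are nonempty, every
vertex of a cell is a (rank 0) cell, rank-0 cells are exactly the singletons,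
rank is strictly monotone, cells are closed under nonempty intersections, ranks
have no gaps, and the diamond property. -/
def IsCC (K : Precc V) : Prop :=
  (∀ x ∈ K.cells, x.Nonempty) ∧
  (∀ x ∈ K.cells, ∀ a ∈ x, ({a} : Finset V) ∈ K.cells) ∧
  (∀ x ∈ K.cells, (K.rk x = 0 ↔ x.card = 1)) ∧
  (∀ x ∈ K.cells, ∀ y ∈ K.cells, x ⊂ y → K.rk x < K.rk y) ∧
  (∀ x ∈ K.cells, ∀ y ∈ K.cells, x ∩ y = ∅ ∨ x ∩ y ∈ K.cells) ∧
  (∀ x ∈ K.cells, ∀ y ∈ K.cells, x ⊂ y →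
    ∃ z ∈ K.cells, x ⊂ z ∧ z ⊆ y ∧ K.rk z = K.rk x + 1) ∧
  (∀ x ∈ K.cells, ∀ y ∈ K.cells, x ⊆ y → K.rk y = K.rk x + 2 →
    ∃ z₁ ∈ K.cells, ∃ z₂ ∈ K.cells, z₁ ≠ z₂ ∧
      ∀ z ∈ K.cells, ((x ⊆ z ∧ z ⊆ y ∧ K.rk z = K.rk x + 1) ↔ (z = z₁ ∨ z = z₂)))

/-- The set of cofaces of a cell. -/
noncomputable def cface (K : Precc V) (x : Finset V) : Finset (Finset V) :=
  K.cells.filter fun y => x ⊆ y ∧ K.rk y = K.rk x + 1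

/-- The set of faces of a cell. -/
noncomputable def face (K : Precc V) (x : Finset V) : Finset (Finset V) :=
  K.cells.filter fun y => y ⊆ x ∧ K.rk y + 1 = K.rk x

/-- The rank (dimension) of the complex. -/
def Rk (K : Precc V) : ℕ := K.cells.sup K.rk

/-- The set of cells of a given rank. -/
noncomputable def cellsOfRank (K : Precc V) (r : ℕ) : Finset (Finset V) :=
  K.cells.filter fun x => K.rk x = r

/-- The dual set of a set of vertices: the maximal cells containing it. -/
noncomputable def dualSet (K : Precc V) (A : Finset V) : Finset (Finset V) :=
  (K.cellsOfRank K.Rk).filter fun z => A ⊆ z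

/-- A cc is pure if every maximal cell has maximal rank. -/
def Pure (K : Precc V) : Prop :=
  ∀ x ∈ K.cells, (∀ y ∈ K.cells, ¬ x ⊂ y) → K.rk x = K.Rk

/-- A cc is graph-based if every edge (1-cell) has exactly two vertices. -/
def GraphBased (K : Precc V) : Prop :=
  ∀ e ∈ K.cells, K.rk e = 1 → e.card = 2

/-- Non-branching: every sub-maximal cell lies in at most two maximal cells. -/
def NonBranching (K : Precc V) : Prop :=
  ∀ y ∈ K.cells, K.rk y + 1 = K.Rk → (K.dualSet y).card ≤ 2

def NonSingular (K : Precc V) : Prop :=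
  K.GraphBased ∧ K.Pure ∧ K.NonBranching

/-- Closed: non-singular and every sub-maximal cell lies in exactly two
maximal cells. -/
def Closed (K : Precc V) : Prop :=
  K.NonSingular ∧ ∀ y ∈ K.cells, K.rk y + 1 = K.Rk → (K.dualSet y).card = 2

/-- Cells of the boundary: cells contained in a sub-maximal cell lying in
exactly one maximal cell. -/
noncomputable def bdryCells (K : Precc V) : Finset (Finset V) :=
  K.cells.filter fun x =>
    ∃ y ∈ K.cells, x ⊆ y ∧ K.rk y + 1 = K.Rk ∧ (K.dualSet y).card = 1

/-- The boundary complex. -/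
noncomputable def boundary (K : Precc V) : Precc V :=
  ⟨K.bdryCells, K.rk⟩

/-- The dual complex of a (pure) cc, with rank of the dual cell of `x` equal
to `Rk K - rk x` (encoded intrinsically via the intersection of the dual set). -/
noncomputable def dual (K : Precc V) : Precc (Finset V) :=
  ⟨K.cells.image K.dualSet, fun A => K.Rk - K.rk (A.inf id)⟩

/-- The barycentric subdivision: cells are nonempty chains of cells of `K`. -/
noncomputable def bdiv (K : Precc V) : Precc (Finset V) :=
  ⟨K.cells.powerset.filter fun c => c.Nonempty ∧ ∀ x ∈ c, ∀ y ∈ c, x ⊆ y ∨ y ⊆ x,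
   fun c => c.card - 1⟩

/-- Isomorphism of (pre)cell complexes: a rank-preserving bijection between the
cell sets preserving and reflecting inclusions. -/
def IsIso {A : Type u} {B : Type v} (K : Precc A) (L : Precc B) : Prop :=
  ∃ f : Finset A → Finset B,
    Set.BijOn f ↑K.cells ↑L.cells ∧
    (∀ x ∈ K.cells, ∀ y ∈ K.cells, (x ⊆ y ↔ f x ⊆ f y)) ∧
    (∀ x ∈ K.cells, L.rk (f x) = K.rk x)

/-- Adjacency of two vertices via an edge of `K`. -/
def EdgeRel (K : Precc V) (a b : V) : Prop :=
  ({a, b} : Finset V) ∈ K.cells ∧ K.rk ({a, b} : Finset V) = 1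

/-- Connectedness of a cc: graph-based, and the 1-skeleton is connected. -/
def Connected (K : Precc V) : Prop :=
  K.GraphBased ∧ ∀ a b : V, ({a} : Finset V) ∈ K.cells → ({b} : Finset V) ∈ K.cells →
    Relation.ReflTransGen K.EdgeRel a b

/-- Cell-connectedness: the 1-skeleton of every cell is connected. -/
def CellConnected (K : Precc V) : Prop :=
  K.GraphBased ∧ ∀ x ∈ K.cells, ∀ a ∈ x, ∀ b ∈ x,
    Relation.ReflTransGen (fun s t => s ∈ x ∧ t ∈ x ∧ K.EdgeRel s t) a b

/-- A local cc: connected and cell-connected. -/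
def LocalCC (K : Precc V) : Prop := K.Connected ∧ K.CellConnected

/-- The vertex set of a cc. -/
noncomputable def vertices (K : Precc V) : Finset V :=
  Finset.univ.filter fun a => ({a} : Finset V) ∈ K.cells

/-- `J` is a sub-cell complex of `K`. -/
def Subcomplex (J K : Precc V) : Prop :=
  J.cells ⊆ K.cells ∧ ∀ x ∈ J.cells, J.rk x = K.rk x

/-- The edges of `K` containing a given vertex. -/
noncomputable def EdgesAt (K : Precc V) (a : V) : Finset (Finset V) :=
  K.cells.filter fun e => K.rk e = 1 ∧ a ∈ e

/-- The edges of `K` at a vertex `a` that are contained in a cell `x`. -/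
noncomputable def edgesIn (K : Precc V) (a : V) (x : Finset V) : Finset (Finset V) :=
  (K.EdgesAt a).filter fun e => e ⊆ x

/-- `r`-fullness: every set of `j` edges at a vertex (`2 ≤ j ≤ r`) is the set of
edges at that vertex of some `j`-cell. -/
def RFull (K : Precc V) (r : ℕ) : Prop :=
  ∀ a : V, ({a} : Finset V) ∈ K.cells → ∀ j : ℕ, 2 ≤ j → j ≤ r →
    ∀ S ⊆ K.EdgesAt a, S.card = j →
      ∃ x ∈ K.cells, K.rk x = j ∧ K.edgesIn a x = S

/-- Fullness (= 2-fullness). -/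
def Full (K : Precc V) : Prop := K.RFull 2

/-- `n`-regularity: every vertex lies in exactly `n` edges. -/
def Regular (K : Precc V) (n : ℕ) : Prop :=
  ∀ a ∈ K.vertices, (K.EdgesAt a).card = n

/-- `m`-edge-regularity: every edge lies in exactly `m` 2-cells. -/
def EdgeRegular (K : Precc V) (m : ℕ) : Prop :=
  ∀ e ∈ K.cells, K.rk e = 1 → ((K.cellsOfRank 2).filter fun C => e ⊆ C).card = m

/-- Simplicial complex: every nonempty subset of a cell is a cell. -/
def Simplicial (K : Precc V) : Prop :=
  ∀ x ∈ K.cells, ∀ y : Finset V, y ⊆ x → y.Nonempty → y ∈ K.cells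

/-- Adjacency in the dual graph: two distinct maximal cells meeting along an
interior sub-maximal cell. -/
def DualAdj (K : Precc V) (z z' : Finset V) : Prop :=
  z ∈ K.cellsOfRank K.Rk ∧ z' ∈ K.cellsOfRank K.Rk ∧ z ≠ z' ∧
  ∃ y ∈ K.cells, K.rk y + 1 = K.Rk ∧ y ⊆ z ∧ y ⊆ z' ∧ (K.dualSet y).card = 2

/-- A pinch: a cell whose set of containing maximal cells induces a
disconnected subgraph of the dual graph. -/
def IsPinch (K : Precc V) (x : Finset V) : Prop :=
  ¬ ∀ z ∈ K.dualSet x, ∀ z' ∈ K.dualSet x,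
      Relation.ReflTransGen
        (fun a b => a ∈ K.dualSet x ∧ b ∈ K.dualSet x ∧ K.DualAdj a b) z z'

/-- Non-pinching: no `K`-pinch and no `∂K`-pinch. -/
def NonPinching (K : Precc V) : Prop :=
  (∀ x ∈ K.cells, ¬ K.IsPinch x) ∧ (∀ x ∈ K.boundary.cells, ¬ K.boundary.IsPinch x)

/-- The Euler characteristic. -/
noncomputable def chi (K : Precc V) : ℤ :=
  ∑ r ∈ Finset.range (K.Rk + 1), (-1 : ℤ) ^ r * ((K.cellsOfRank r).card : ℤ)

/-- Restriction of `K` to the cells contained in `A`. -/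
noncomputable def restrict (K : Precc V) (A : Finset V) : Precc V :=
  ⟨K.cells.filter fun x => x ⊆ A, K.rk⟩

/-- A shelling of a (non-singular) cc: for rank 0 the trivial order on the one
point, for rank ≥ 1 a linear order of the facets such that the boundary of the
first facet has a shelling and each facet meets the previous ones in a
non-singular complex of rank one less that has a shelling completable into a
shelling of the boundary of the facet, with the boundary conditions of
Definition 4.9 of the paper (see `IsShelling` below).
The intersection of the `k`-th facet with the union of the previous ones,
as a subcomplex of `K`. -/
noncomputable def interComplex (K : Precc V) (L : List (Finset V)) (k : ℕ)
    (hk : k < L.length) : Precc V :=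
  K.restrict (L.get ⟨k, hk⟩ ∩ (L.take k).foldr (· ∪ ·) ∅)

set_option maxHeartbeats 1000000 in
inductive IsShelling : Precc V → List (Finset V) → Prop where
  | point (K : Precc V) (x : Finset V) (hx : K.cells = {x}) (h0 : K.rk x = 0) :
      IsShelling K [x]
  | step (K : Precc V) (L : List (Finset V)) (L₀ : List (Finset V))
      (S S' : ℕ → List (Finset V))
      (hR : 1 ≤ K.Rk) (hnd : L.Nodup) (hne : L ≠ [])
      (henum : L.toFinset = K.cellsOfRank K.Rk)
      (hfirst : IsShelling ((K.restrict L.headI).boundary) L₀)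
      (hS : ∀ (k : ℕ) (hk : k < L.length), 0 < k →
        IsShelling (K.interComplex L k hk) (S k))
      (hS' : ∀ (k : ℕ) (hk : k < L.length), 0 < k →
        IsShelling ((K.restrict (L.get ⟨k, hk⟩)).boundary) (S' k))
      (hpre : ∀ (k : ℕ), k < L.length → 0 < k → S k <+: S' k)
      (hns : ∀ (k : ℕ) (hk : k < L.length), 0 < k →
        (K.interComplex L k hk).NonSingular ∧
        (K.interComplex L k hk).Rk + 1 = K.Rk ∧
        (k < L.length - 1 → (K.interComplex L k hk).bdryCells.Nonempty) ∧
        ((K.interComplex L k hk).bdryCells = ∅ →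
          k = L.length - 1 ∧ K.Closed ∧
          (K.interComplex L k hk).cells = ((K.restrict (L.get ⟨k, hk⟩)).boundary).cells)) :
      IsShelling K L

/-- A shellable cc. -/
def Shellable (K : Precc V) : Prop :=
  K.NonSingular ∧ ∃ L : List (Finset V), IsShelling K L

/-- The connection relation: `∇^a_b e = f`, i.e. `f` is the edge at `b`
associated to the edge `e` at `a` via the unique 2-cell containing `e` and the
edge `{a,b}` (and `{a,b}` is sent to itself). -/
def ConnRel (K : Precc V) (a b : V) (e f : Finset V) : Prop :=
  (e = ({a, b} : Finset V) ∧ f = ({a, b} : Finset V)) ∨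
  (e ≠ ({a, b} : Finset V) ∧ f ≠ ({a, b} : Finset V) ∧
    e ∈ K.cells ∧ f ∈ K.cells ∧ K.rk e = 1 ∧ K.rk f = 1 ∧ a ∈ e ∧ b ∈ f ∧
    ∃ C ∈ K.cells, K.rk C = 2 ∧ e ⊆ C ∧ ({a, b} : Finset V) ⊆ C ∧ f ⊆ C)

/-- `C` is a connected component of a 2-cell of `K`. -/
def IsComponentOfTwoCell (K : Precc V) (C : Finset V) : Prop :=
  ∃ C₀ ∈ K.cells, K.rk C₀ = 2 ∧ C ⊆ C₀ ∧ C.Nonempty ∧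
    (∀ e ∈ K.cells, K.rk e = 1 → e ⊆ C₀ → (e ∩ C).Nonempty → e ⊆ C) ∧
    (∀ a ∈ C, ∀ b ∈ C,
      Relation.ReflTransGen (fun s t => s ∈ C ∧ t ∈ C ∧ K.EdgeRel s t) a b)

/-- `c` is a cyclic enumeration of the vertex set `C` along edges of `K`. -/
def IsCycleOf (K : Precc V) (C : Finset V) (c : List V) : Prop :=
  c ≠ [] ∧ c.Nodup ∧ c.toFinset = C ∧
  ∀ a : V, c.head? = some a → List.Chain' K.EdgeRel (c ++ [a])

/-- A path in the 1-skeleton, recorded by its list of visited vertices. -/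
def IsPathList (K : Precc V) (l : List V) : Prop :=
  l ≠ [] ∧ List.Chain' K.EdgeRel l

/-- Transport of edges along a path via the connection. -/
inductive Transport (K : Precc V) : List V → Finset V → Finset V → Prop where
  | single (a : V) (e : Finset V) : Transport K [a] e e
  | cons {a b : V} {l : List V} {e f g : Finset V} :
      ConnRel K a b e f → Transport K (b :: l) f g → Transport K (a :: b :: l) e g

/-- `p` and `p'` are the two complementary arcs of the boundary cycle of the
2-cell component `C`, with the same endpoints. -/
def ComplementaryArcs (K : Precc V) (C : Finset V) (p p' : List V) : Prop :=
  p ≠ [] ∧ p' ≠ [] ∧ p.head? = p'.head? ∧ p.getLast? = p'.getLast? ∧ p.Nodup ∧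
  ∃ c : List V, IsCycleOf K C c ∧ ∃ a : V, c.head? = some a ∧
    (p ++ p'.reverse.tail = c ++ [a] ∨ p' ++ p.reverse.tail = c ++ [a])

/-- Elementary moves of paths: an edge move (deleting a back-and-forth along an
edge) and a 2-cell move (replacing an arc of a 2-cell component by the
complementary arc). -/
inductive Move (K : Precc V) : List V → List V → Prop where
  | edgeDel (a b : List V) (u w : V) (h : K.EdgeRel u w) :
      Move K (a ++ u :: w :: u :: b) (a ++ u :: b)
  | cellMove (a b p p' : List V) (C : Finset V)
      (hC : K.IsComponentOfTwoCell C) (harc : K.ComplementaryArcs C p p') :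
      Move K (a ++ p ++ b) (a ++ p' ++ b)

/-- Homotopy of paths: generated by finitely many moves (and their inverses). -/
def Homotopic (K : Precc V) (p q : List V) : Prop :=
  Relation.ReflTransGen (fun l l' => Move K l l' ∨ Move K l' l) p q

/-- Monodromy-freedom: the holonomy of the connection around the boundary loop
of any connected component of a 2-cell is the identity on the incident edges. -/
def MonodromyFree (K : Precc V) : Prop :=
  ∀ C : Finset V, K.IsComponentOfTwoCell C → ∀ c : List V, K.IsCycleOf C c →
    ∀ a : V, c.head? = some a →
      ∀ e f : Finset V, e ∈ K.cells → K.rk e = 1 → e ∩ C = {a} →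
        Transport K (c ++ [a]) e f → f = e

/-- Evenness: every connected component of every 2-cell has an even number of
vertices. -/
def EvenCC (K : Precc V) : Prop :=
  ∀ C : Finset V, K.IsComponentOfTwoCell C → Even C.card

/-- The collar of a vertex set `A` in `K`: cells meeting `A` properly. -/
noncomputable def collarCells (K : Precc V) (A : Finset V) : Finset (Finset V) :=
  K.cells.filter fun x => (x ∩ A).Nonempty ∧ ¬ x ⊆ A

/-- The set `E^x_A` of edges of `x` with exactly one vertex in `A`. -/
noncomputable def edgeCollar (K : Precc V) (A : Finset V) (x : Finset V) : Finset (Finset V) :=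
  K.cells.filter fun e => K.rk e = 1 ∧ e ⊆ x ∧ (e ∩ A).card = 1

/-- The `∼`-dual of a cell: the union of its dual in `K` and its dual in `∂K`. -/
noncomputable def bdualSet (K : Precc V) (x : Finset V) : Finset (Finset V) :=
  K.dualSet x ∪ (K.boundary.cells.filter fun y => K.rk y + 1 = K.Rk ∧ x ⊆ y)

/-- `J` is a (possibly empty) union of connected components of `K`. -/
def IsUnionOfComponents (K J : Precc V) : Prop :=
  ∃ W : Finset V, W ⊆ K.vertices ∧
    (∀ a ∈ W, ∀ b : V, Relation.ReflTransGen K.EdgeRel a b → b ∈ W) ∧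
    J.cells = K.cells.filter fun x => x ⊆ W

/-- `g` is the greatest lower bound of `S` among the cells of `K`. -/
def IsMeetOf (K : Precc V) (S : Finset (Finset V)) (g : Finset V) : Prop :=
  g ∈ K.cells ∧ (∀ s ∈ S, g ⊆ s) ∧ ∀ b ∈ K.cells, (∀ s ∈ S, b ⊆ s) → b ⊆ g

/-- `g` is the least upper bound of `S` among the cells of `K`. -/
def IsJoinOf (K : Precc V) (S : Finset (Finset V)) (g : Finset V) : Prop :=
  g ∈ K.cells ∧ (∀ s ∈ S, s ⊆ g) ∧ ∀ b ∈ K.cells, (∀ s ∈ S, s ⊆ b) → g ⊆ b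

/-- A reduction `ρ : J → K` (so that `J` is a subdivision of `K`). -/
def IsReduction (J K : Precc V) (ρ : Finset V → Finset V) : Prop :=
  (∀ x ∈ J.cells, ρ x ∈ K.cells) ∧
  (∀ y ∈ K.cells, ∃ x ∈ J.cells, ρ x = y) ∧
  (∀ x ∈ J.cells, ∀ y ∈ J.cells, x ⊆ y → ρ x ⊆ ρ y) ∧
  (∀ x ∈ J.cells, ∀ y ∈ J.cells, K.rk (ρ x) = 0 → ρ x = ρ y → x = y) ∧
  (∀ x ∈ J.cells, ∀ g : Finset V, IsMeetOf J (J.cface x) g →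
    ∀ h : Finset V, IsMeetOf K ((J.cface x).image ρ) h → ρ g = h) ∧
  (∀ x ∈ J.cells, ∀ y ∈ K.cells, ρ x ⊆ y →
    ∃ w ∈ J.cells, x ⊆ w ∧ J.rk w = K.rk y ∧ ρ w = y) ∧
  (∀ x ∈ J.cells, J.rk x + 1 = K.rk (ρ x) →
    ((J.cface x).filter fun w => ρ w = ρ x).card = 2) ∧
  (∀ x ∈ J.cells, J.rk x = K.rk (ρ x) →
    ∀ y ∈ K.cface (ρ x), ((J.cface x).filter fun w => ρ w = y).card = 1)

/-- A collapse `π : J → K` (so that `J` is an expansion of `K`). -/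
def IsCollapse (J K : Precc V) (π : Finset V → Finset V) : Prop :=
  (∀ x ∈ J.cells, π x ∈ K.cells) ∧
  (∀ y ∈ K.cells, ∃ x ∈ J.cells, π x = y) ∧
  (∀ x ∈ J.cells, ∀ y ∈ J.cells, x ⊆ y → π x ⊆ π y) ∧
  (∀ x ∈ J.cells, ∀ y ∈ J.cells, (∀ z ∈ K.cells, ¬ π x ⊂ z) → π x = π y → x = y) ∧
  (∀ x ∈ J.cells, 1 ≤ J.rk x → IsJoinOf K ((J.face x).image π) (π x)) ∧
  (∀ x ∈ J.cells, ∀ y ∈ K.cells, y ⊆ π x →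
    ∃ w ∈ J.cells, w ⊆ x ∧ J.rk w = K.rk y ∧ π w = y) ∧
  (∀ x ∈ J.cells, K.rk (π x) + 1 = J.rk x →
    ((J.face x).filter fun w => π w = π x).card = 2) ∧
  (∀ x ∈ J.cells, J.rk x = K.rk (π x) →
    ∀ y ∈ K.face (π x), ((J.face x).filter fun w => π w = y).card = 1)

/-- The domain `E_a^{dual b}` of the connection `∇^a_b`: edges at `a` lying in
a common 2-cell with the edge `{a,b}`. -/
noncomputable def connDomain (K : Precc V) (a b : V) : Finset (Finset V) :=
  (K.EdgesAt a).filter fun e =>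
    ∃ C ∈ K.cells, K.rk C = 2 ∧ e ⊆ C ∧ ({a, b} : Finset V) ⊆ C

end Precc

namespace Precc

variable {V : Type u} [DecidableEq V] [Fintype V]


lemma mem_dualSet {K : Precc V} {A z : Finset V} :
    z ∈ K.dualSet A ↔ z ∈ K.cells ∧ K.rk z = K.Rk ∧ A ⊆ z := by
  simp [dualSet, cellsOfRank, Finset.mem_filter, and_assoc]

lemma rk_le_Rk {K : Precc V} {x : Finset V} (hx : x ∈ K.cells) : K.rk x ≤ K.Rk :=
  Finset.le_sup hx

lemma exists_mem_dualSet {K : Precc V} (hp : K.Pure) {x : Finset V}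
    (hx : x ∈ K.cells) : ∃ z, z ∈ K.dualSet x := by
  have hS : (K.cells.filter fun c => x ⊆ c).Nonempty :=
    ⟨x, Finset.mem_filter.mpr ⟨hx, subset_rfl⟩⟩
  obtain ⟨m, hm, hmax⟩ : ∃ m ∈ (K.cells.filter fun c => x ⊆ c),
      ∀ y ∈ (K.cells.filter fun c => x ⊆ c), ¬ m < y := by
    obtain ⟨m, hm⟩ := Finset.exists_maximal hS
    exact ⟨m, hm.1, fun y hy hmy => lt_irrefl _ (lt_of_lt_of_le hmy (hm.2 hy hmy.le))⟩
  rw [Finset.mem_filter] at hm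
  have hmR : K.rk m = K.Rk := by
    refine hp m hm.1 (fun y hy hmy => ?_)
    exact hmax y (Finset.mem_filter.mpr ⟨hy, hm.2.trans hmy.subset⟩) hmy
  exact ⟨m, mem_dualSet.mpr ⟨hm.1, hmR, hm.2⟩⟩

lemma key_lemma {K : Precc V} (hK : K.IsCC) (hcl : K.Closed) :
    ∀ d : ℕ, ∀ x ∈ K.cells, ∀ y ∈ K.cells, x ⊂ y → K.Rk - K.rk x ≤ d →
      ∃ z ∈ K.dualSet x, ¬ y ⊆ z := by
  obtain ⟨h1, h2, h3, h4, h5, h6, h7⟩ := hK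
  intro d
  induction d with
  | zero =>
    intro x hx y hy hxy hd
    have h := h4 x hx y hy hxy
    have h' := rk_le_Rk hy
    omega
  | succ d ih =>
    intro x hx y hy hxy hd
    have hrxy := h4 x hx y hy hxy
    have hyR := rk_le_Rk hy
    have hxR : K.rk x < K.Rk := lt_of_lt_of_le hrxy hyR
    by_cases hsub : K.rk x + 1 = K.Rk
    · -- submaximal case
      have hcard := hcl.2 x hx hsub
      have hyRk : K.rk y = K.Rk := by omega
      have hyd : y ∈ K.dualSet x := mem_dualSet.mpr ⟨hy, hyRk, hxy.subset⟩
      have : ∃ z ∈ K.dualSet x, z ≠ y := by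
        by_contra hcon
        push_neg at hcon
        have hss : K.dualSet x ⊆ {y} := fun z hz =>
          Finset.mem_singleton.mpr (hcon z hz)
        have := Finset.card_le_card hss
        simp [hcard] at this
      obtain ⟨z, hz, hzy⟩ := this
      refine ⟨z, hz, fun hyz => ?_⟩
      rw [mem_dualSet] at hz
      have : y ⊂ z := lt_of_le_of_ne hyz (Ne.symm hzy)
      have := h4 y hy z hz.1 this
      omega
    · by_contra hcon
      push_neg at hcon
      obtain ⟨y₀, hy₀c, hxy₀, hy₀y, hrky₀⟩ := h6 x hx y hy hxy
      obtain ⟨z0, hz0⟩ := exists_mem_dualSet hcl.1.2.1 hx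
      have hz0' := hz0
      rw [mem_dualSet] at hz0'
      have hy₀z0 : y₀ ⊆ z0 := hy₀y.trans (hcon z0 hz0)
      have hy₀z0' : y₀ ⊂ z0 := lt_of_le_of_ne hy₀z0 (by
        intro h; rw [h] at hrky₀; omega)
      obtain ⟨y', hy'c, hy₀y', hy'z0, hrky'⟩ := h6 y₀ hy₀c z0 hz0'.1 hy₀z0'
      have hxy' : x ⊆ y' := hxy₀.subset.trans hy₀y'.subset
      have hrky'2 : K.rk y' = K.rk x + 2 := by omega
      obtain ⟨z₁, hz₁, z₂, hz₂, hne12, hiff⟩ := h7 x hx y' hy'c hxy' hrky'2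
      have hy₀12 : y₀ = z₁ ∨ y₀ = z₂ :=
        (hiff y₀ hy₀c).mp ⟨hxy₀.subset, hy₀y'.subset, by omega⟩
      obtain ⟨w, hwc, hwne, hxw, hwy', hrkw⟩ :
          ∃ w, w ∈ K.cells ∧ w ≠ y₀ ∧ x ⊆ w ∧ w ⊆ y' ∧ K.rk w = K.rk x + 1 := by
        rcases hy₀12 with h | h
        · obtain ⟨ha, hb, hc⟩ := (hiff z₂ hz₂).mpr (Or.inr rfl)
          exact ⟨z₂, hz₂, by rw [h]; exact fun he => hne12 he.symm, ha, hb, hc⟩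
        · obtain ⟨ha, hb, hc⟩ := (hiff z₁ hz₁).mpr (Or.inl rfl)
          exact ⟨z₁, hz₁, by rw [h]; exact hne12, ha, hb, hc⟩
      have hxw' : x ⊂ w := lt_of_le_of_ne hxw (by
        intro h; rw [← h] at hrkw; omega)
      have hwy'' : w ⊂ y' := lt_of_le_of_ne hwy' (by
        intro h; rw [h] at hrkw; omega)
      obtain ⟨z', hz'd, hz'ny'⟩ := ih w hwc y' hy'c hwy'' (by omega)
      rw [mem_dualSet] at hz'd
      obtain ⟨hz'c, hz'R, hwz'⟩ := hz'd
      have hz'x : z' ∈ K.dualSet x := mem_dualSet.mpr ⟨hz'c, hz'R, hxw.trans hwz'⟩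
      have hyz' : y ⊆ z' := hcon z' hz'x
      have hy₀z' : y₀ ⊆ z' := hy₀y.trans hyz'
      have hu : y' ∩ z' ∈ K.cells := by
        rcases h5 y' hy'c z' hz'c with h | h
        · exfalso
          have hxu : x ⊆ y' ∩ z' := Finset.subset_inter hxy' (hxw.trans hwz')
          obtain ⟨a, ha⟩ := h1 x hx
          have : a ∈ y' ∩ z' := hxu ha
          rw [h] at this
          simp at this
        · exact h
      have hy₀u : y₀ ⊆ y' ∩ z' := Finset.subset_inter hy₀y'.subset hy₀z'
      have hwu : w ⊆ y' ∩ z' := Finset.subset_inter hwy' hwz'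
      have hy₀u' : y₀ ⊂ y' ∩ z' := lt_of_le_of_ne hy₀u (by
        intro h
        have hwy₀ : w ⊂ y₀ := lt_of_le_of_ne (h ▸ hwu) hwne
        have := h4 w hwc y₀ hy₀c hwy₀
        omega)
      have hrku := h4 y₀ hy₀c (y' ∩ z') hu hy₀u'
      have huy' : y' ∩ z' = y' := by
        by_contra hne2
        have := h4 _ hu y' hy'c
          (lt_of_le_of_ne Finset.inter_subset_left hne2)
        omega
      exact hz'ny' (by rw [← huy']; exact Finset.inter_subset_right)

lemma inf'_mem_cells {K : Precc V}
    (h5 : ∀ x ∈ K.cells, ∀ y ∈ K.cells, x ∩ y = ∅ ∨ x ∩ y ∈ K.cells) :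
    ∀ F : Finset (Finset V), ∀ hF : F.Nonempty, (∀ c ∈ F, c ∈ K.cells) →
      (F.inf' hF id).Nonempty → F.inf' hF id ∈ K.cells := by
  intro F
  induction F using Finset.cons_induction with
  | empty => intro h; exact absurd h (by simp)
  | cons a s ha ih =>
    intro _ hc hne
    rcases s.eq_empty_or_nonempty with rfl | hs
    · simpa using hc a (by simp)
    · rw [Finset.inf'_cons (H := hs)] at hne ⊢
      have hsne : (s.inf' hs id).Nonempty := by
        obtain ⟨b, hb⟩ := hne
        exact ⟨b, (Finset.mem_inter.mp hb).2⟩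
      have hscell := ih hs (fun c hcs => hc c (Finset.mem_cons_of_mem hcs)) hsne
      rcases h5 a (hc a (Finset.mem_cons_self a s)) _ hscell with h | h
      · exact absurd hne
          (by rw [show (id a ⊓ s.inf' hs id : Finset V) = a ∩ s.inf' hs id from rfl, h]; simp)
      · exact h

lemma subset_of_dualSet_subset {K : Precc V} (hK : K.IsCC) (hcl : K.Closed)
    {x y : Finset V} (hx : x ∈ K.cells) (hy : y ∈ K.cells)
    (h : K.dualSet y ⊆ K.dualSet x) : x ⊆ y := by
  by_contra hxy
  obtain ⟨a, hax, hay⟩ := Finset.not_subset.mp hxy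
  obtain ⟨z, hz⟩ := exists_mem_dualSet hcl.1.2.1 hy
  set F := K.cells.filter (fun c => y ⊆ c ∧ a ∈ c) with hFdef
  have hzF : z ∈ F := by
    have hzx := h hz
    rw [mem_dualSet] at hz hzx
    exact Finset.mem_filter.mpr ⟨hz.1, hz.2.2, hzx.2.2 hax⟩
  have hFne : F.Nonempty := ⟨z, hzF⟩
  have hyc : ∀ c ∈ F, y ⊆ c := fun c hc => (Finset.mem_filter.mp hc).2.1
  have hac : ∀ c ∈ F, a ∈ c := fun c hc => (Finset.mem_filter.mp hc).2.2
  set w := F.inf' hFne id with hwdef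
  have hyw : y ⊆ w := Finset.le_inf' hFne id hyc
  have haw : a ∈ w := by
    have h1 : ({a} : Finset V) ≤ F.inf' hFne id :=
      Finset.le_inf' hFne id (fun c hc => Finset.singleton_subset_iff.mpr (hac c hc))
    exact Finset.singleton_subset_iff.mp h1
  have hwcell : w ∈ K.cells :=
    inf'_mem_cells hK.2.2.2.2.1 F hFne
      (fun c hc => (Finset.mem_filter.mp hc).1) ⟨a, haw⟩
  have hyw' : y ⊂ w := lt_of_le_of_ne hyw (fun he => hay (he ▸ haw))
  obtain ⟨z', hz'd, hnz'⟩ := key_lemma hK hcl K.Rk y hy w hwcell hyw' (by omega)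
  have hz'x := h hz'd
  rw [mem_dualSet] at hz'd hz'x
  have hz'F : z' ∈ F := Finset.mem_filter.mpr ⟨hz'd.1, hz'd.2.2, hz'x.2.2 hax⟩
  exact hnz' (Finset.inf'_le id hz'F)

/-- In a closed cc, `x ⊊ y` iff the dual set of `y` is
strictly contained in the dual set of `x`; consequently the duality map is a
bijection from `K` onto its image (i.e. it is injective on cells). -/
theorem statement_1 (K : Precc V) (hK : K.IsCC) (hcl : K.Closed) :
    (∀ x ∈ K.cells, ∀ y ∈ K.cells, (x ⊂ y ↔ K.dualSet y ⊂ K.dualSet x)) ∧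
    Set.InjOn K.dualSet ↑K.cells := by
  constructor
  · intro x hx y hy
    constructor
    · intro hxy
      have hsub : K.dualSet y ⊆ K.dualSet x := fun z hz => by
        rw [mem_dualSet] at hz ⊢
        exact ⟨hz.1, hz.2.1, hxy.subset.trans hz.2.2⟩
      obtain ⟨z, hzx, hzny⟩ := key_lemma hK hcl K.Rk x hx y hy hxy (by omega)
      refine lt_of_le_of_ne hsub (fun he => ?_)
      have hzy : z ∈ K.dualSet y := he ▸ hzx
      rw [mem_dualSet] at hzy
      exact hzny hzy.2.2
    · intro hss
      have hxsuby := subset_of_dualSet_subset hK hcl hx hy hss.subset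
      refine lt_of_le_of_ne hxsuby (fun he => ?_)
      rw [he] at hss
      exact lt_irrefl _ hss
  · intro x hx y hy he
    exact subset_antisymm
      (subset_of_dualSet_subset hK hcl hx hy he.ge)
      (subset_of_dualSet_subset hK hcl hy hx he.le)

end Precc
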